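/- (Annulus-to-disk rank bound for the 2D Fourier kernel.) There exists an absolute constant C > 0 such that for all reals 0 ≤ a ≤ b, R > 0, and 0 < ε < 1 with (b−a)·R < 1, there exist a natural number r with r ≤ C·(1 + log(1/ε))·(bR + log(1/ε) + 1) and functions u_1,…,u_r : ℝ² → ℂ and v_1,…,v_r : ℝ² → ℂ such that for every x ∈ ℝ² with ‖x‖ ≤ R and every ω ∈ ℝ² with a ≤ ‖ω‖ ≤ b, one has |e^{i ω·x} − Σ_{ℓ=1}^r u_ℓ(x)·conj(v_ℓ(ω))| ≤ ε. -/

import Mathlib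

open Finset

open scoped InnerProductSpace


lemma aux_pow_cancel {w c : ℂ} (h : w * c = 1) {s t s' t' : ℕ} (hst : s + t' = s' + t) :
    w ^ s * c ^ t = w ^ s' * c ^ t' := by
  calc w^s*c^t = w^s*c^t*(w*c)^t' := by rw [h, one_pow, mul_one]
    _ = w^(s+t')*c^(t+t') := by rw [mul_pow, pow_add, pow_add]; ring
    _ = w^(s'+t)*c^(t'+t) := by rw [hst, add_comm t t']
    _ = w^s'*c^t'*(w*c)^t := by rw [mul_pow, pow_add, pow_add]; ring
    _ = w^s'*c^t' := by rw [h, one_pow, mul_one]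

lemma aux_key (w c α β A D : ℂ) (hwc : w * c = 1) (N K : ℕ) :
    ∑ l ∈ range K, ∑ m ∈ range (2*(N+K)+1),
      ((1/(l.factorial : ℂ)) * ∑ k ∈ range N, ∑ j ∈ range (k+l+1),
        (if m + (k+l) = 2*j + (N+K) then
          A^k/(k.factorial:ℂ) * ((k+l).choose j : ℂ) * α^j * β^(k+l-j) else 0))
      * (D^l * w^m * c^(N+K))
    = (∑ l ∈ range K, (D*(α*w+β*c))^l / (l.factorial:ℂ))
      * (∑ k ∈ range N, (A*(α*w+β*c))^k / (k.factorial:ℂ)) := by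
  rw [sum_mul_sum]
  refine sum_congr rfl fun l hl => ?_
  rw [mem_range] at hl
  simp only [sum_mul, mul_sum, ite_mul, zero_mul, mul_ite, mul_zero]
  rw [Finset.sum_comm]
  refine sum_congr rfl fun k hk => ?_
  rw [mem_range] at hk
  rw [Finset.sum_comm]
  have hG : (α*w+β*c)^(k+l) = ∑ j ∈ range (k+l+1),
      (α*w)^j*(β*c)^(k+l-j)*((k+l).choose j : ℂ) := add_pow _ _ _
  have hR : (D*(α*w+β*c))^l / (l.factorial:ℂ) * ((A*(α*w+β*c))^k / (k.factorial:ℂ))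
      = ∑ j ∈ range (k+l+1), (D^l*A^k/((l.factorial:ℂ)*(k.factorial:ℂ))) *
          ((α*w)^j*(β*c)^(k+l-j)*((k+l).choose j : ℂ)) := by
    rw [← mul_sum, ← hG, mul_pow, mul_pow]
    rw [show (α*w+β*c)^(k+l) = (α*w+β*c)^k * (α*w+β*c)^l from pow_add _ _ _]
    ring
  rw [hR]
  refine sum_congr rfl fun j hj => ?_
  rw [mem_range] at hj
  have hcond : ∀ m : ℕ, (m + (k+l) = 2*j + (N+K)) ↔ (m = 2*j + (N+K) - (k+l)) := by omega
  simp only [hcond]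
  rw [Finset.sum_ite_eq' (range (2*(N+K)+1)) (2*j + (N+K) - (k+l))]
  rw [if_pos (by rw [mem_range]; omega)]
  have hcancel : w ^ (2*j + (N+K) - (k+l)) * c ^ (N+K) = w ^ j * c ^ (k+l-j) :=
    aux_pow_cancel hwc (by omega)
  linear_combination ((1/(l.factorial:ℂ)) *
    (A^k/(k.factorial:ℂ)) * ((k+l).choose j : ℂ) * α^j * β^(k+l-j) * D^l) * hcancel

lemma aux_two_pow_fact (n : ℕ) : 2^n ≤ (n+1).factorial := by
  induction n with
  | zero => simp
  | succ n ih =>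
      rw [pow_succ, Nat.factorial_succ]
      calc 2^n * 2 ≤ (n+1).factorial * 2 := by omega
        _ ≤ (n+1+1) * (n+1).factorial := by nlinarith [Nat.factorial_pos (n+1)]

lemma aux_pow_fact {t : ℝ} (ht : 0 ≤ t) (m d : ℕ) (hm : 2*t ≤ m) :
    t^(m+d) / ((m+d).factorial : ℝ) ≤ Real.exp t * (1/2)^d := by
  have h1 : (m.factorial : ℝ) * (m+1)^d ≤ ((m+d).factorial : ℝ) := by
    exact_mod_cast Nat.factorial_mul_pow_le_factorial
  have hpos : (0:ℝ) < (m.factorial : ℝ) * (m+1)^d := by positivity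
  calc t^(m+d) / ((m+d).factorial : ℝ) ≤ t^(m+d) / ((m.factorial : ℝ) * (m+1)^d) := by
        apply div_le_div_of_nonneg_left (by positivity) hpos h1
    _ = (t^m/(m.factorial:ℝ)) * (t/((m:ℝ)+1))^d := by
        rw [pow_add, div_pow]; push_cast; ring
    _ ≤ Real.exp t * (1/2)^d := by
        apply mul_le_mul (Real.pow_div_factorial_le_exp t ht m) ?_ (by positivity)
          (Real.exp_pos t).le
        apply pow_le_pow_left₀ (by positivity)
        rw [div_le_div_iff₀ (by positivity) (by norm_num)]
        linarith

lemma aux_quarter_pow (n : ℕ) : ((1:ℝ)/4)^n ≤ Real.exp (-(n:ℝ)) := by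
  have h : ((1:ℝ)/4) ≤ Real.exp (-1) := by
    rw [Real.exp_neg, le_inv_comm₀ (by norm_num) (Real.exp_pos 1)]
    nlinarith [Real.exp_one_lt_d9]
  calc ((1:ℝ)/4)^n ≤ (Real.exp (-1))^n := pow_le_pow_left₀ (by norm_num) h n
    _ = Real.exp (-(n:ℝ)) := by
        rw [← Real.exp_nat_mul]; ring_nf


set_option maxHeartbeats 2000000 in
theorem stmt13 :
    ∃ C : ℝ, 0 < C ∧
      ∀ a b R ε : ℝ, 0 ≤ a → a ≤ b → 0 < R → 0 < ε → ε < 1 → (b - a) * R < 1 →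
        ∃ r : ℕ,
          (r : ℝ) ≤ C * (1 + Real.log (1 / ε)) * (b * R + Real.log (1 / ε) + 1) ∧
          ∃ u v : Fin r → EuclideanSpace ℝ (Fin 2) → ℂ,
            ∀ x ω : EuclideanSpace ℝ (Fin 2), ‖x‖ ≤ R → a ≤ ‖ω‖ → ‖ω‖ ≤ b →
              ‖Complex.exp (Complex.I * (⟪ω, x⟫_ℝ : ℝ)) -
                ∑ ℓ : Fin r, u ℓ x * (starRingEnd ℂ) (v ℓ ω)‖ ≤ ε := by
  classical
  refine ⟨300, by norm_num, ?_⟩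
  intro a b R ε ha0 hab hR hε hε1 hbaR
  set L := Real.log (1/ε) with hLdef
  have hε' : (0:ℝ) < 1/ε := by positivity
  have h1ε : 1 ≤ 1/ε := by rw [le_div_iff₀ hε]; linarith
  have hL0 : 0 ≤ L := Real.log_nonneg h1ε
  have hexpL : Real.exp L = 1/ε := Real.exp_log hε'
  have hb0 : 0 ≤ b := le_trans ha0 hab
  have hbR0 : 0 ≤ b*R := mul_nonneg hb0 hR.le
  set cL := ⌈L⌉₊ with hcLdef
  set cB := ⌈b*R⌉₊ with hcBdef
  set K := 2*cL+4 with hKdef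
  set N := 4*cB+2*cL+12 with hNdef
  refine ⟨K*(2*(N+K)+1), ?_, ?_⟩
  · -- rank bound
    have h1 : (cL:ℝ) ≤ L+1 := (Nat.ceil_lt_add_one hL0).le
    have h2 : (cB:ℝ) ≤ b*R+1 := (Nat.ceil_lt_add_one hbR0).le
    have h3 : (0:ℝ) ≤ cL := Nat.cast_nonneg _
    have h4 : (0:ℝ) ≤ cB := Nat.cast_nonneg _
    have hKr : ((K:ℝ)) = 2*(cL:ℝ)+4 := by rw [hKdef]; push_cast; ring
    have hNr : ((N:ℝ)) = 4*(cB:ℝ)+2*(cL:ℝ)+12 := by rw [hNdef]; push_cast; ring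
    have hcast : ((K*(2*(N+K)+1) : ℕ) : ℝ) = (K:ℝ)*(2*((N:ℝ)+(K:ℝ))+1) := by push_cast; ring
    rw [hcast, hKr, hNr]
    have hA : (2*(cL:ℝ)+4) ≤ 6*(1+L) := by linarith
    have hB : (2*(((4*(cB:ℝ)+2*(cL:ℝ)+12))+((2*(cL:ℝ)+4)))+1) ≤ 49*(b*R+L+1) := by linarith
    calc (2*(cL:ℝ)+4)*(2*((4*(cB:ℝ)+2*(cL:ℝ)+12)+(2*(cL:ℝ)+4))+1)
        ≤ (6*(1+L))*(49*(b*R+L+1)) := by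
          apply mul_le_mul hA hB (by linarith) (by linarith)
      _ ≤ 300*(1+L)*(b*R+L+1) := by
          nlinarith [mul_nonneg (show (0:ℝ) ≤ 1+L by linarith) (show (0:ℝ) ≤ b*R+L+1 by linarith)]
  · -- construction
    set zfun : EuclideanSpace ℝ (Fin 2) → ℂ := fun p => (p 0 : ℂ) + (p 1) * Complex.I with hzfun
    set alph : EuclideanSpace ℝ (Fin 2) → ℂ := fun x => (starRingEnd ℂ) (zfun x) / 2 with halph
    set wv : EuclideanSpace ℝ (Fin 2) → ℂ := fun ω =>
      if zfun ω = 0 then 1 else zfun ω / (‖zfun ω‖ : ℝ) with hwv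
    set Uf : ℕ → ℕ → EuclideanSpace ℝ (Fin 2) → ℂ := fun l m x =>
      (1/(l.factorial:ℂ)) * ∑ k ∈ range N, ∑ j ∈ range (k+l+1),
        (if m + (k+l) = 2*j + (N+K) then
          (Complex.I*(a:ℂ))^k/(k.factorial:ℂ) * ((k+l).choose j : ℂ) * (alph x)^j *
            ((starRingEnd ℂ) (alph x))^(k+l-j) else 0) with hUfdef
    set Vf : ℕ → ℕ → EuclideanSpace ℝ (Fin 2) → ℂ := fun l m ω =>
      (starRingEnd ℂ) ((Complex.I*((‖ω‖-a : ℝ):ℂ))^l * (wv ω)^m *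
        ((starRingEnd ℂ) (wv ω))^(N+K)) with hVfdef
    refine ⟨fun ℓ x => Uf (finProdFinEquiv.symm ℓ).1 (finProdFinEquiv.symm ℓ).2 x,
           fun ℓ ω => Vf (finProdFinEquiv.symm ℓ).1 (finProdFinEquiv.symm ℓ).2 ω, ?_⟩
    intro x ω hx hωa hωb
    -- geometric facts
    have hzabs : ∀ p : EuclideanSpace ℝ (Fin 2), ‖zfun p‖ = ‖p‖ := by
      intro p
      rw [hzfun]
      simp only []
      rw [Complex.norm_add_mul_I, EuclideanSpace.norm_eq]
      congr 1
      simp [Fin.sum_univ_two, Real.norm_eq_abs, sq_abs]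
    have habsw : ‖wv ω‖ = 1 := by
      by_cases h : zfun ω = 0
      · simp [hwv, h]
      · simp only [hwv, if_neg h]
        rw [norm_div, Complex.norm_real, Real.norm_eq_abs, abs_of_nonneg (norm_nonneg _)]
        exact div_self (by simpa using h)
    have hwc1 : wv ω * (starRingEnd ℂ) (wv ω) = 1 := by
      rw [Complex.mul_conj, Complex.normSq_eq_norm_sq, habsw]; norm_num
    have hρw : ((‖ω‖ : ℝ):ℂ) * wv ω = zfun ω := by
      by_cases h : zfun ω = 0
      · have h0 : ‖ω‖ = 0 := by rw [← hzabs ω, h, norm_zero]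
        simp [hwv, h, h0]
      · simp only [hwv, if_neg h, ← hzabs ω]
        rw [mul_comm, div_mul_cancel₀]
        exact Complex.ofReal_ne_zero.2 (norm_ne_zero_iff.mpr h)
    set g : ℝ := 2*(alph x * wv ω).re with hgdef
    have hGeq : alph x * wv ω + (starRingEnd ℂ) (alph x) * (starRingEnd ℂ) (wv ω) = (g:ℂ) := by
      rw [← map_mul]
      rw [Complex.add_conj]
    have habsalph : ‖alph x‖ = ‖x‖/2 := by
      rw [halph]
      simp only []
      rw [norm_div, Complex.norm_conj, hzabs]
      norm_num
    have habsg : |g| ≤ R := by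
      have h1 : |g| ≤ 2 * ‖alph x * wv ω‖ := by
        rw [hgdef, abs_mul]
        have := Complex.abs_re_le_norm (alph x * wv ω)
        rw [abs_two]
        nlinarith [norm_nonneg (alph x * wv ω)]
      rw [norm_mul, habsw, mul_one, habsalph] at h1
      linarith
    have hinner : ((⟪ω, x⟫_ℝ : ℝ):ℂ) = ((‖ω‖:ℝ):ℂ) * (g:ℂ) := by
      have h2 : ((‖ω‖:ℝ):ℂ) * ((starRingEnd ℂ) (wv ω)) = (starRingEnd ℂ) (zfun ω) := by
        rw [← hρw, map_mul, Complex.conj_ofReal]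
      have h3 : ((‖ω‖:ℝ):ℂ) * (g:ℂ) =
          alph x * zfun ω + (starRingEnd ℂ) (alph x) * (starRingEnd ℂ) (zfun ω) := by
        rw [← hGeq, mul_add, ← h2, ← hρw]; ring
      have h1 : ⟪ω, x⟫_ℝ = ω 0 * x 0 + ω 1 * x 1 := by
        simp [PiLp.inner_apply, RCLike.inner_apply, Fin.sum_univ_two]; ring
      rw [h1, h3, halph, hzfun]
      simp only [map_add, map_mul, Complex.conj_ofReal, Complex.conj_I, map_div₀, map_ofNat,
        Complex.conj_conj]
      apply Complex.ext <;> simp [Complex.mul_re, Complex.mul_im] <;> ring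
    -- the sum equals a product of two Taylor polynomials
    set DD : ℂ := Complex.I*((‖ω‖-a : ℝ):ℂ) with hDD
    set AA : ℂ := Complex.I*(a:ℂ) with hAA
    set PA : ℂ := ∑ k ∈ range N, (AA * (g:ℂ))^k/(k.factorial:ℂ) with hPA
    set PB : ℂ := ∑ l ∈ range K, (DD * (g:ℂ))^l/(l.factorial:ℂ) with hPB
    have hconjV : ∀ l m : ℕ, (starRingEnd ℂ) (Vf l m ω) =
        DD^l * (wv ω)^m * ((starRingEnd ℂ) (wv ω))^(N+K) := by
      intro l m
      rw [hVfdef]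
      simp only [Complex.conj_conj, hDD]
    have hsum : (∑ ℓ : Fin (K*(2*(N+K)+1)),
          Uf (finProdFinEquiv.symm ℓ).1 (finProdFinEquiv.symm ℓ).2 x *
            (starRingEnd ℂ) (Vf (finProdFinEquiv.symm ℓ).1 (finProdFinEquiv.symm ℓ).2 ω))
        = PB * PA := by
      have e1 : (∑ ℓ : Fin (K*(2*(N+K)+1)),
          Uf (finProdFinEquiv.symm ℓ).1 (finProdFinEquiv.symm ℓ).2 x *
            (starRingEnd ℂ) (Vf (finProdFinEquiv.symm ℓ).1 (finProdFinEquiv.symm ℓ).2 ω))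
          = ∑ p : Fin K × Fin (2*(N+K)+1), Uf p.1 p.2 x * (starRingEnd ℂ) (Vf p.1 p.2 ω) :=
        Equiv.sum_comp finProdFinEquiv.symm
          (fun p => Uf p.1 p.2 x * (starRingEnd ℂ) (Vf p.1 p.2 ω))
      rw [e1, Fintype.sum_prod_type]
      rw [Fin.sum_univ_eq_sum_range
        (fun l => ∑ m : Fin (2*(N+K)+1), Uf l m x * (starRingEnd ℂ) (Vf l m ω)) K]
      have e2 : ∀ l ∈ range K, (∑ m : Fin (2*(N+K)+1), Uf l m x * (starRingEnd ℂ) (Vf l m ω))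
          = ∑ m ∈ range (2*(N+K)+1), Uf l m x * (starRingEnd ℂ) (Vf l m ω) := fun l _ =>
        Fin.sum_univ_eq_sum_range (fun m => Uf l m x * (starRingEnd ℂ) (Vf l m ω)) _
      rw [sum_congr rfl e2]
      have hkey := aux_key (wv ω) ((starRingEnd ℂ) (wv ω)) (alph x) ((starRingEnd ℂ) (alph x))
        AA DD hwc1 N K
      rw [hGeq] at hkey
      simp only [hconjV, hUfdef]
      rw [hPB, hPA, hAA]
      exact hkey
    -- split the exponential
    have hsplit : Complex.exp (Complex.I * (⟪ω, x⟫_ℝ : ℝ)) =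
        Complex.exp (AA * (g:ℂ)) * Complex.exp (DD * (g:ℂ)) := by
      rw [← Complex.exp_add]
      congr 1
      rw [hinner, hAA, hDD]
      push_cast
      ring
    -- error bounds
    have habsAA : ‖AA * (g:ℂ)‖ ≤ b*R := by
      rw [hAA, norm_mul, norm_mul, Complex.norm_I, Complex.norm_real, Real.norm_eq_abs, Complex.norm_real, Real.norm_eq_abs, one_mul,
        abs_of_nonneg ha0]
      calc a * |g| ≤ a * R := mul_le_mul_of_nonneg_left habsg ha0
        _ ≤ b * R := mul_le_mul_of_nonneg_right hab hR.le
    have habsDD : ‖DD * (g:ℂ)‖ ≤ 1 := by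
      rw [hDD, norm_mul, norm_mul, Complex.norm_I, Complex.norm_real, Real.norm_eq_abs, Complex.norm_real, Real.norm_eq_abs, one_mul,
        abs_of_nonneg (by linarith : (0:ℝ) ≤ ‖ω‖ - a)]
      calc (‖ω‖-a) * |g| ≤ (b-a) * R :=
            mul_le_mul (by linarith) habsg (abs_nonneg g) (by linarith)
        _ ≤ 1 := hbaR.le
    have hcBle : b*R ≤ (cB:ℝ) := Nat.le_ceil _
    have hcLle : L ≤ (cL:ℝ) := Nat.le_ceil _
    have hNcast : ((N:ℕ):ℝ) = 4*(cB:ℝ)+2*(cL:ℝ)+12 := by rw [hNdef]; push_cast; ring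
    have hKcast : ((K:ℕ):ℝ) = 2*(cL:ℝ)+4 := by rw [hKdef]; push_cast; ring
    -- bound for exp(AA g) - PA
    have herrA : ‖Complex.exp (AA * (g:ℂ)) - PA‖ ≤ ε/2048 := by
      have hhyp : ‖AA * (g:ℂ)‖ / (N.succ : ℝ) ≤ 1/2 := by
        rw [div_le_div_iff₀ (by positivity) (by norm_num)]
        have : ((N.succ : ℕ):ℝ) = (N:ℝ)+1 := by push_cast; ring
        rw [this, hNcast]
        nlinarith [norm_nonneg (AA * (g:ℂ)), Nat.cast_nonneg (α := ℝ) cL,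
          Nat.cast_nonneg (α := ℝ) cB]
      have h1 := Complex.exp_bound' hhyp
      rw [hPA]
      refine le_trans h1 ?_
      have h2 : ‖AA * (g:ℂ)‖ ^ N ≤ (b*R)^N :=
        pow_le_pow_left₀ (norm_nonneg _) habsAA N
      have h3 : (b*R)^N / (N.factorial:ℝ) ≤ Real.exp (b*R) * (1/2)^(2*cB+2*cL+12) := by
        have hNeq : N = 2*cB + (2*cB+2*cL+12) := by rw [hNdef]; ring
        rw [hNeq]
        apply aux_pow_fact hbR0
        calc 2*(b*R) ≤ 2*(cB:ℝ) := by linarith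
          _ = ((2*cB : ℕ):ℝ) := by push_cast; ring
      have h4 : Real.exp (b*R) * (1/2:ℝ)^(2*cB+2*cL+12) ≤ ε/4096 := by
        have e1 : ((1:ℝ)/2)^(2*cB+2*cL+12) = (1/4)^cB * (1/4)^cL * (1/2)^12 := by
          rw [pow_add, pow_add, pow_mul, pow_mul]; norm_num
        rw [e1]
        have e2 : ((1:ℝ)/4)^cB ≤ Real.exp (-(cB:ℝ)) := aux_quarter_pow cB
        have e3 : ((1:ℝ)/4)^cL ≤ Real.exp (-(cL:ℝ)) := aux_quarter_pow cL
        have e4 : Real.exp (b*R) * Real.exp (-(cB:ℝ)) ≤ 1 := by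
          rw [← Real.exp_add]
          rw [show (1:ℝ) = Real.exp 0 by simp]
          exact Real.exp_le_exp.2 (by linarith)
        have e5 : Real.exp (-(cL:ℝ)) ≤ ε := by
          rw [show ε = Real.exp (-L) by rw [Real.exp_neg, hexpL]; field_simp]
          exact Real.exp_le_exp.2 (by linarith)
        calc Real.exp (b*R) * ((1/4:ℝ)^cB * (1/4)^cL * (1/2)^12)
            = (Real.exp (b*R) * (1/4)^cB) * ((1/4)^cL * (1/2)^12) := by ring
          _ ≤ (Real.exp (b*R) * Real.exp (-(cB:ℝ))) * (ε * (1/2)^12) := by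
              apply mul_le_mul
              · exact mul_le_mul_of_nonneg_left e2 (Real.exp_pos _).le
              · exact mul_le_mul_of_nonneg_right (le_trans e3 e5) (by norm_num)
              · positivity
              · positivity
          _ ≤ 1 * (ε * (1/2)^12) := by
              apply mul_le_mul_of_nonneg_right e4 (by positivity)
          _ = ε/4096 := by ring
      calc ‖AA * (g:ℂ)‖ ^ N / (N.factorial:ℝ) * 2
          ≤ (b*R)^N / (N.factorial:ℝ) * 2 := by gcongr
        _ ≤ (Real.exp (b*R) * (1/2)^(2*cB+2*cL+12)) * 2 := by gcongr
        _ ≤ (ε/4096) * 2 := by gcongr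
        _ = ε/2048 := by ring
    -- bound for exp(DD g) - PB
    have herrB : ‖Complex.exp (DD * (g:ℂ)) - PB‖ ≤ ε/4 := by
      have hhyp : ‖DD * (g:ℂ)‖ / (K.succ : ℝ) ≤ 1/2 := by
        rw [div_le_div_iff₀ (by positivity) (by norm_num)]
        have : ((K.succ : ℕ):ℝ) = (K:ℝ)+1 := by push_cast; ring
        rw [this, hKcast]
        nlinarith [norm_nonneg (DD * (g:ℂ)), Nat.cast_nonneg (α := ℝ) cL, habsDD]
      have h1 := Complex.exp_bound' hhyp
      rw [hPB]
      refine le_trans h1 ?_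
      have h2 : ‖DD * (g:ℂ)‖ ^ K ≤ 1 :=
        pow_le_one₀ (norm_nonneg _) habsDD
      have hKfact : (8:ℝ)/ε ≤ (K.factorial:ℝ) := by
        have h6 : (2:ℝ)^(2*cL+3) ≤ (K.factorial:ℝ) := by
          have := aux_two_pow_fact (2*cL+3)
          have heq : 2*cL+3+1 = K := by rw [hKdef]
          rw [heq] at this
          exact_mod_cast this
        have h7 : (2:ℝ)^(2*cL+3) = 8 * 4^cL := by
          rw [pow_add, pow_mul]; norm_num [mul_comm]
        have h8 : Real.exp L ≤ (4:ℝ)^cL := by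
          calc Real.exp L ≤ Real.exp (cL:ℝ) := Real.exp_le_exp.2 hcLle
            _ = (Real.exp 1)^cL := by rw [← Real.exp_nat_mul]; ring_nf
            _ ≤ 4^cL := pow_le_pow_left₀ (Real.exp_pos 1).le
                (by nlinarith [Real.exp_one_lt_d9]) _
        calc (8:ℝ)/ε = 8 * (1/ε) := by ring
          _ = 8 * Real.exp L := by rw [hexpL]
          _ ≤ 8 * 4^cL := by nlinarith
          _ = 2^(2*cL+3) := h7.symm
          _ ≤ (K.factorial:ℝ) := h6
      have hKf0 : (0:ℝ) < (K.factorial:ℝ) := by positivity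
      calc ‖DD * (g:ℂ)‖ ^ K / (K.factorial:ℝ) * 2
          ≤ 1 / (K.factorial:ℝ) * 2 := by gcongr
        _ ≤ 1 / ((8:ℝ)/ε) * 2 := by
            apply mul_le_mul_of_nonneg_right _ (by norm_num)
            apply div_le_div_of_nonneg_left (by norm_num) (by positivity) hKfact
        _ = ε/4 := by field_simp; ring
    have hPBle : ‖PB‖ ≤ 3 := by
      rw [hPB]
      refine le_trans (norm_sum_le _ _) ?_
      have h1 : ∀ l ∈ range K, ‖(DD * (g:ℂ))^l/(l.factorial:ℂ)‖ ≤ (1:ℝ)^l/(l.factorial:ℝ) := by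
        intro l _
        rw [norm_div, norm_pow, Complex.norm_natCast]
        have h0 : (0:ℝ) < (l.factorial:ℝ) := by positivity
        have h2 : ‖DD * (g:ℂ)‖ ^ l ≤ (1:ℝ)^l :=
          pow_le_pow_left₀ (norm_nonneg _) habsDD l
        exact div_le_div_of_nonneg_right h2 h0.le |>.trans_eq rfl
      refine le_trans (sum_le_sum h1) ?_
      refine le_trans (Real.sum_le_exp_of_nonneg (by norm_num) K) ?_
      nlinarith [Real.exp_one_lt_d9]
    have hEA1 : ‖Complex.exp (AA * (g:ℂ))‖ = 1 := by
      rw [Complex.norm_exp]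
      have : (AA * (g:ℂ)).re = 0 := by
        rw [hAA]
        simp [Complex.mul_re, Complex.mul_im]
      rw [this, Real.exp_zero]
    -- final assembly
    rw [hsum, hsplit]
    have hdecomp : Complex.exp (AA * (g:ℂ)) * Complex.exp (DD * (g:ℂ)) - PB * PA =
        Complex.exp (AA * (g:ℂ)) * (Complex.exp (DD * (g:ℂ)) - PB) +
        PB * (Complex.exp (AA * (g:ℂ)) - PA) := by ring
    rw [hdecomp]
    calc ‖Complex.exp (AA * (g:ℂ)) * (Complex.exp (DD * (g:ℂ)) - PB) +
            PB * (Complex.exp (AA * (g:ℂ)) - PA)‖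
        ≤ ‖Complex.exp (AA * (g:ℂ)) * (Complex.exp (DD * (g:ℂ)) - PB)‖ +
          ‖PB * (Complex.exp (AA * (g:ℂ)) - PA)‖ := norm_add_le _ _
      _ = ‖Complex.exp (AA * (g:ℂ))‖ * ‖Complex.exp (DD * (g:ℂ)) - PB‖ +
          ‖PB‖ * ‖Complex.exp (AA * (g:ℂ)) - PA‖ := by
          rw [norm_mul, norm_mul]
      _ ≤ 1 * (ε/4) + 3 * (ε/2048) := by
          rw [hEA1, one_mul, one_mul]
          exact add_le_add herrB
            (mul_le_mul hPBle herrA (norm_nonneg _) (by norm_num))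
      _ ≤ ε := by linarith
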